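/- Let Λ₁ < Λ₂, T > 0, β > 0 and a ≥ 0. Let h : (Λ₁,Λ₂) × (0,T) → (0,∞) be four times continuously differentiable in x and once in t, let ζ₁, ζ₂ : (Λ₁,Λ₂) × (0,T) → ℝ be twice continuously differentiable in x, and let u, v, p be twice continuously differentiable on the closure of Ω = {(x,y,t) : Λ₁ < x < Λ₂, 0 < y < h(x,t), 0 < t < T}. Assume: (i) in Ω: ∂ₓu + ∂_y v = 0, ∂_y² u = ∂ₓ p, and ∂_y p = 0; (ii) at y = h(x,t): ∂ₜh + u ∂ₓh = v, p = −∂ₓ²h, and ∂_y u = −∂ₓζ₁; (iii) at y = 0: v = 0 and ∂_y u = (a/2)∂ₓζ₂ + β u. Then h satisfies the thin film equation ∂ₜh + ∂ₓ[ (h/3 + 1/β) h² ∂ₓ³h − ½(∂ₓζ₁) h² − (1/β)(∂ₓζ₁ + (a/2)∂ₓζ₂) h ] = 0 on (Λ₁,Λ₂) × (0,T). -/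

import Mathlib

open Set

lemma incr_eq_of_deriv_eqOn_Ioo {f D d : ℝ → ℝ} {A B : ℝ} (hAB : A < B)
    (hf : Differentiable ℝ f) (hD : Differentiable ℝ D)
    (hfd : ∀ y ∈ Set.Ioo A B, deriv f y = d y)
    (hDd : ∀ y ∈ Set.Ioo A B, deriv D y = d y) :
    ∀ y ∈ Set.Icc A B, f y - f A = D y - D A := by
  set φ : ℝ → ℝ := fun y => f y - D y with hφdef
  have hφ : Differentiable ℝ φ := hf.sub hD
  have hder : ∀ y ∈ Set.Ioo A B, HasDerivAt φ 0 y := by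
    intro y hy
    have h1 := ((hf y).hasDerivAt.sub (hD y).hasDerivAt)
    rwa [hfd y hy, hDd y hy, sub_self] at h1
  have key : ∀ y ∈ Set.Ioo A B, ∀ z ∈ Set.Ioo A B, y ≤ z → φ z = φ y := by
    intro y hy z hz hyz
    have := eq_of_has_deriv_right_eq (f' := fun _ => (0:ℝ)) (a := y) (b := z)
      (f := φ) (g := fun _ => φ y)
      (fun w hw => (hder w ⟨lt_of_lt_of_le hy.1 hw.1, lt_of_le_of_lt hw.2.le hz.2⟩).hasDerivWithinAt)
      (fun w _ => (hasDerivAt_const w (φ y)).hasDerivWithinAt)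
      (hφ.continuous.continuousOn) continuousOn_const rfl
    exact this z ⟨hyz, le_rfl⟩
  have hm : (A + B) / 2 ∈ Set.Ioo A B := ⟨by linarith, by linarith⟩
  have heq : Set.EqOn φ (fun _ => φ ((A + B) / 2)) (Set.Ioo A B) := by
    intro y hy
    rcases le_total y ((A + B) / 2) with hc | hc
    · exact (key y hy _ hm hc).symm
    · exact key _ hm y hy hc
  have hcl : Set.EqOn φ (fun _ => φ ((A + B) / 2)) (Set.Icc A B) := by
    have := heq.closure hφ.continuous continuous_const
    rwa [closure_Ioo hAB.ne] at this
  intro y hy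
  have h1 : φ y = φ ((A + B) / 2) := hcl hy
  have h2 : φ A = φ ((A + B) / 2) := hcl ⟨le_rfl, hAB.le⟩
  simp only [hφdef] at h1 h2
  linarith

lemma contDiff_deriv_succ {n : ℕ} {f : ℝ → ℝ} (hf : ContDiff ℝ (n+1 : ℕ) f) :
    ContDiff ℝ (n : ℕ) (deriv f) := by
  have h2 : ContDiff ℝ ((n : WithTop ℕ∞) + 1) f := by exact_mod_cast hf
  exact (contDiff_succ_iff_deriv.mp h2).2.2

lemma thin_film_aux (Λ₁ Λ₂ β a : ℝ) (hβ : 0 < β)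
    (H Z1 Z2 ht' : ℝ → ℝ) (U V Pp : ℝ → ℝ → ℝ)
    (hpos : ∀ x ∈ Set.Ioo Λ₁ Λ₂, 0 < H x)
    (HC : ContDiff ℝ 4 H)
    (hZ1 : Differentiable ℝ Z1) (hZ2 : Differentiable ℝ Z2)
    (hUy : ∀ x, ContDiff ℝ 2 (U x))
    (hVy : ∀ x, Differentiable ℝ (V x))
    (hPy : ∀ x, Differentiable ℝ (Pp x))
    (hincomp : ∀ x ∈ Set.Ioo Λ₁ Λ₂, ∀ y ∈ Set.Ioo 0 (H x),
      deriv (fun x' => U x' y) x + deriv (V x) y = 0)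
    (hstokes : ∀ x ∈ Set.Ioo Λ₁ Λ₂, ∀ y ∈ Set.Ioo 0 (H x),
      deriv (deriv (U x)) y = deriv (fun x' => Pp x' y) x)
    (hpy : ∀ x ∈ Set.Ioo Λ₁ Λ₂, ∀ y ∈ Set.Ioo 0 (H x), deriv (Pp x) y = 0)
    (hkin : ∀ x ∈ Set.Ioo Λ₁ Λ₂, ht' x + U x (H x) * deriv H x = V x (H x))
    (hpress : ∀ x ∈ Set.Ioo Λ₁ Λ₂, Pp x (H x) = -(deriv (deriv H) x))
    (htang : ∀ x ∈ Set.Ioo Λ₁ Λ₂, deriv (U x) (H x) = -(Z1 x))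
    (hbot : ∀ x ∈ Set.Ioo Λ₁ Λ₂, V x 0 = 0)
    (hslip : ∀ x ∈ Set.Ioo Λ₁ Λ₂, deriv (U x) 0 = a / 2 * Z2 x + β * U x 0) :
    ∀ x ∈ Set.Ioo Λ₁ Λ₂,
      ht' x + deriv (fun x' =>
          (H x' / 3 + 1 / β) * (H x') ^ 2 * deriv (deriv (deriv H)) x'
            - (1 / 2) * Z1 x' * (H x') ^ 2
            - (1 / β) * (Z1 x' + a / 2 * Z2 x') * H x') x = 0 := by
  have hβ' : β ≠ 0 := ne_of_gt hβ
  -- smoothness chain of H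
  have HC3 : ContDiff ℝ 3 (deriv H) := contDiff_deriv_succ (n := 3) (by exact_mod_cast HC)
  have HC2 : ContDiff ℝ 2 (deriv (deriv H)) := contDiff_deriv_succ (n := 2) (by exact_mod_cast HC3)
  have HC1 : ContDiff ℝ 1 (deriv (deriv (deriv H))) :=
    contDiff_deriv_succ (n := 1) (by exact_mod_cast HC2)
  have hHd : Differentiable ℝ H := HC.differentiable (by norm_num)
  have hH2d : Differentiable ℝ (deriv (deriv H)) := HC2.differentiable (by norm_num)
  have hH3d : Differentiable ℝ (deriv (deriv (deriv H))) := HC1.differentiable (by norm_num)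
  have hHcont : Continuous H := HC.continuous
  -- named coefficient functions
  set P : ℝ → ℝ := fun x' => -(deriv (deriv (deriv H)) x') with hPdef
  set A : ℝ → ℝ := fun x' => -(Z1 x') - P x' * H x' with hAdef
  set Bf : ℝ → ℝ := fun x' => (A x' - a / 2 * Z2 x') / β with hBdef
  have hPdiff : Differentiable ℝ P := hH3d.neg
  have hAdiff : Differentiable ℝ A := (hZ1.neg).sub (hPdiff.mul hHd)
  have hBdiff : Differentiable ℝ Bf := ((hAdiff.sub ((hZ2.const_mul _))).div_const β)
  -- Step I: pressure is constant in y and equals -H'' on the film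
  have stepP : ∀ x' ∈ Set.Ioo Λ₁ Λ₂, ∀ y ∈ Set.Icc 0 (H x'),
      Pp x' y = -(deriv (deriv H) x') := by
    intro x' hx' y hy
    have h0 := hpos x' hx'
    have hconst := incr_eq_of_deriv_eqOn_Ioo (d := fun _ => (0:ℝ)) h0 (hPy x')
      (differentiable_const 0) (fun y hy => hpy x' hx' y hy) (fun y _ => deriv_const _ _)
    have h1 : Pp x' y = Pp x' 0 := by have := hconst y hy; linarith
    have h2 : Pp x' (H x') = Pp x' 0 := by
      have := hconst (H x') ⟨h0.le, le_rfl⟩; linarith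
    rw [h1, ← h2, hpress x' hx']
  -- Step II: x-derivative of pressure
  have stepPx : ∀ x' ∈ Set.Ioo Λ₁ Λ₂, ∀ y ∈ Set.Ioo 0 (H x'),
      deriv (fun x'' => Pp x'' y) x' = P x' := by
    intro x' hx' y hy
    have hopen : IsOpen {x'' | x'' ∈ Set.Ioo Λ₁ Λ₂ ∧ y < H x''} :=
      (isOpen_Ioo).inter (isOpen_lt continuous_const hHcont)
    have hmem : x' ∈ {x'' | x'' ∈ Set.Ioo Λ₁ Λ₂ ∧ y < H x''} := ⟨hx', hy.2⟩
    have hev : (fun x'' => Pp x'' y) =ᶠ[nhds x'] (fun x'' => -(deriv (deriv H) x'')) := by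
      filter_upwards [hopen.mem_nhds hmem] with x'' hx''
      exact stepP x'' hx''.1 y ⟨hy.1.le, hx''.2.le⟩
    rw [hev.deriv_eq]
    exact (((hH2d x').hasDerivAt).neg).deriv
  -- Step III: velocity profile
  have stepUd : ∀ x' ∈ Set.Ioo Λ₁ Λ₂, ∀ y ∈ Set.Icc 0 (H x'),
      deriv (U x') y = P x' * y + A x' := by
    intro x' hx' y hy
    have h0 := hpos x' hx'
    have hud : Differentiable ℝ (deriv (U x')) :=
      (contDiff_deriv_succ (n := 1) (by exact_mod_cast hUy x')).differentiable (by norm_num)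
    have hconst := incr_eq_of_deriv_eqOn_Ioo (d := fun _ => P x') (D := fun y => P x' * y) h0 hud
      (by fun_prop)
      (fun y hy => by rw [hstokes x' hx' y hy]; exact stepPx x' hx' y hy)
      (fun y _ => by
        have : HasDerivAt (fun y : ℝ => P x' * y) (P x') y := by
          simpa using (hasDerivAt_id y).const_mul (P x')
        exact this.deriv)
    have hH : deriv (U x') (H x') - deriv (U x') 0 = P x' * H x' - P x' * 0 :=
      hconst (H x') ⟨h0.le, le_rfl⟩
    have h0eq : deriv (U x') 0 = A x' := by
      rw [htang x' hx'] at hH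
      simp only [hAdef]; linarith
    have hy' : deriv (U x') y - deriv (U x') 0 = P x' * y - P x' * 0 := hconst y hy
    rw [h0eq] at hy'; linarith
  have stepU : ∀ x' ∈ Set.Ioo Λ₁ Λ₂, ∀ y ∈ Set.Icc 0 (H x'),
      U x' y = P x' * y ^ 2 / 2 + A x' * y + Bf x' := by
    intro x' hx' y hy
    have h0 := hpos x' hx'
    have hud : Differentiable ℝ (U x') := (hUy x').differentiable (by norm_num)
    have hDdiff : Differentiable ℝ (fun y : ℝ => P x' * y ^ 2 / 2 + A x' * y) := by
      fun_prop
    have hconst := incr_eq_of_deriv_eqOn_Ioo (d := fun y => P x' * y + A x') h0 hud hDdiff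
      (fun y hy => stepUd x' hx' y ⟨hy.1.le, hy.2.le⟩)
      (fun y _ => by
        have hD : HasDerivAt (fun y : ℝ => P x' * y ^ 2 / 2 + A x' * y) (P x' * y + A x') y := by
          have h1 : HasDerivAt (fun y : ℝ => P x' * y ^ 2 / 2 + A x' * y)
              (P x' * (2 * y ^ 1) / 2 + A x' * 1) y :=
            (((hasDerivAt_pow 2 y).const_mul (P x')).div_const 2).add
              ((hasDerivAt_id y).const_mul (A x'))
          convert h1 using 1; ring
        exact hD.deriv)
    have hU0 : U x' 0 = Bf x' := by
      have h1 := hslip x' hx'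
      have h2 : deriv (U x') 0 = A x' := by
        have := stepUd x' hx' 0 ⟨le_rfl, h0.le⟩; simpa using this
      rw [h2] at h1
      have h3 : U x' 0 * β = A x' - a / 2 * Z2 x' := by linear_combination -h1
      simp only [hBdef]
      exact (eq_div_iff hβ').mpr h3
    have h9 : U x' y - U x' 0 = P x' * y ^ 2 / 2 + A x' * y - (P x' * 0 ^ 2 / 2 + A x' * 0) :=
      hconst y hy
    rw [hU0] at h9
    linarith [h9]
  -- now fix x
  intro x hx
  have h0x := hpos x hx
  set dP := deriv P x with hdP
  set dA := deriv A x with hdA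
  set dB := deriv Bf x with hdB
  set dH := deriv H x with hdH
  -- Step IV: x-derivative of u
  have stepUx : ∀ y ∈ Set.Ioo 0 (H x),
      deriv (fun x'' => U x'' y) x = dP * y ^ 2 / 2 + dA * y + dB := by
    intro y hy
    have hopen : IsOpen {x'' | x'' ∈ Set.Ioo Λ₁ Λ₂ ∧ y < H x''} :=
      (isOpen_Ioo).inter (isOpen_lt continuous_const hHcont)
    have hmem : x ∈ {x'' | x'' ∈ Set.Ioo Λ₁ Λ₂ ∧ y < H x''} := ⟨hx, hy.2⟩
    have hev : (fun x'' => U x'' y) =ᶠ[nhds x]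
        (fun x'' => P x'' * y ^ 2 / 2 + A x'' * y + Bf x'') := by
      filter_upwards [hopen.mem_nhds hmem] with x'' hx''
      exact stepU x'' hx''.1 y ⟨hy.1.le, hx''.2.le⟩
    rw [hev.deriv_eq]
    have hD : HasDerivAt (fun x'' => P x'' * y ^ 2 / 2 + A x'' * y + Bf x'')
        (dP * y ^ 2 / 2 + dA * y + dB) x :=
      ((((hPdiff x).hasDerivAt.mul_const (y ^ 2)).div_const 2).add
        ((hAdiff x).hasDerivAt.mul_const y)).add (hBdiff x).hasDerivAt
    exact hD.deriv
  -- Step V: v at the free surface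
  have stepV : V x (H x) = -(dP * (H x) ^ 3 / 6 + dA * (H x) ^ 2 / 2 + dB * H x) := by
    have hDdiff : Differentiable ℝ (fun y : ℝ => -(dP * y ^ 3 / 6 + dA * y ^ 2 / 2 + dB * y)) := by
      fun_prop
    have hconst := incr_eq_of_deriv_eqOn_Ioo
      (d := fun y => -(dP * y ^ 2 / 2 + dA * y + dB)) h0x (hVy x) hDdiff
      (fun y hy => by
        have h1 := hincomp x hx y hy
        have h2 := stepUx y hy
        rw [h2] at h1; linarith)
      (fun y _ => by
        have hD : HasDerivAt (fun y : ℝ => -(dP * y ^ 3 / 6 + dA * y ^ 2 / 2 + dB * y))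
            (-(dP * y ^ 2 / 2 + dA * y + dB)) y := by
          have h1 : HasDerivAt (fun y : ℝ => dP * y ^ 3 / 6 + dA * y ^ 2 / 2 + dB * y)
              (dP * (3 * y ^ 2) / 6 + dA * (2 * y ^ 1) / 2 + dB * 1) y :=
            ((((hasDerivAt_pow 3 y).const_mul dP).div_const 6).add
              (((hasDerivAt_pow 2 y).const_mul dA).div_const 2)).add
              ((hasDerivAt_id y).const_mul dB)
          have : HasDerivAt (fun y : ℝ => -(dP * y ^ 3 / 6 + dA * y ^ 2 / 2 + dB * y))
              (-(dP * (3 * y ^ 2) / 6 + dA * (2 * y ^ 1) / 2 + dB * 1)) y := h1.neg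
          convert this using 1; ring
        exact hD.deriv)
    have h9 : V x (H x) - V x 0
        = -(dP * (H x) ^ 3 / 6 + dA * (H x) ^ 2 / 2 + dB * H x)
          - -(dP * 0 ^ 3 / 6 + dA * 0 ^ 2 / 2 + dB * 0) := hconst (H x) ⟨h0x.le, le_rfl⟩
    rw [hbot x hx] at h9
    linarith [h9]
  -- Step VI: derivative of the flux
  have hFd : HasDerivAt (fun x' => P x' * (H x') ^ 3 / 6 + A x' * (H x') ^ 2 / 2 + Bf x' * H x')
      ((dP * (H x) ^ 3 + P x * (3 * (H x) ^ 2 * dH)) / 6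
        + (dA * (H x) ^ 2 + A x * (2 * (H x) ^ 1 * dH)) / 2
        + (dB * H x + Bf x * dH)) x := by
    exact ((((hPdiff x).hasDerivAt.mul ((hHd x).hasDerivAt.pow 3)).div_const 6).add
      (((hAdiff x).hasDerivAt.mul ((hHd x).hasDerivAt.pow 2)).div_const 2)).add
      ((hBdiff x).hasDerivAt.mul (hHd x).hasDerivAt)
  -- the bracket equals the flux
  have hFeq : (fun x' =>
      (H x' / 3 + 1 / β) * (H x') ^ 2 * deriv (deriv (deriv H)) x'
        - (1 / 2) * Z1 x' * (H x') ^ 2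
        - (1 / β) * (Z1 x' + a / 2 * Z2 x') * H x')
      = (fun x' => P x' * (H x') ^ 3 / 6 + A x' * (H x') ^ 2 / 2 + Bf x' * H x') := by
    funext x'
    simp only [hBdef, hAdef, hPdef]
    field_simp
    ring
  rw [hFeq, hFd.deriv]
  -- kinematic condition concludes
  have hkin' := hkin x hx
  have hUsurf : U x (H x) = P x * (H x) ^ 2 / 2 + A x * H x + Bf x :=
    stepU x hx (H x) ⟨h0x.le, le_rfl⟩
  rw [hUsurf, stepV, ← hdH] at hkin'
  have hht' : ht' x = -(dP * (H x) ^ 3 / 6 + dA * (H x) ^ 2 / 2 + dB * H x)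
      - (P x * (H x) ^ 2 / 2 + A x * H x + Bf x) * dH := by linarith
  rw [hht']
  ring



/-- **Derivation of the thin film equation with small slip length.**
Let `Λ₁ < Λ₂`, `T > 0`, `β > 0`, `a ≥ 0`. Let `h > 0` be the film profile
(C⁴ in `x`, C¹ in `t`), `ζ₁, ζ₂` the surface density deviations (C² in
`x`), and `(u, v), p` the C² velocity and pressure in the film region
`Ω = {Λ₁ < x < Λ₂, 0 < y < h(x,t), 0 < t < T}`. Assume the lubrication
Stokes system (i) in `Ω`, the kinematic, Laplace-pressure and
Marangoni conditions (ii) at the free surface `y = h(x,t)`, and the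
impermeability and generalized Navier slip conditions (iii) at `y = 0`.
Then `h` satisfies the thin film equation
`∂ₜh + ∂ₓ[(h/3 + 1/β)h²∂ₓ³h − ½(∂ₓζ₁)h² − (1/β)(∂ₓζ₁ + (a/2)∂ₓζ₂)h] = 0`. -/
theorem thin_film_equation_derivation
    (Λ₁ Λ₂ T β a : ℝ) (hΛ : Λ₁ < Λ₂) (hT : 0 < T) (hβ : 0 < β) (ha : 0 ≤ a)
    (h ζ₁ ζ₂ : ℝ × ℝ → ℝ)
    (u v p : ℝ × ℝ × ℝ → ℝ)
    (hpos : ∀ x ∈ Set.Ioo Λ₁ Λ₂, ∀ t ∈ Set.Ioo 0 T, 0 < h (x, t))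
    (hhx : ∀ t : ℝ, ContDiff ℝ 4 (fun x => h (x, t)))
    (hht : ∀ x : ℝ, ContDiff ℝ 1 (fun t => h (x, t)))
    (hζ₁x : ∀ t : ℝ, ContDiff ℝ 2 (fun x => ζ₁ (x, t)))
    (hζ₂x : ∀ t : ℝ, ContDiff ℝ 2 (fun x => ζ₂ (x, t)))
    (hu : ContDiff ℝ 2 u) (hv : ContDiff ℝ 2 v) (hp : ContDiff ℝ 2 p)
    -- (i) in Ω
    (hincomp : ∀ x ∈ Set.Ioo Λ₁ Λ₂, ∀ t ∈ Set.Ioo 0 T,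
      ∀ y ∈ Set.Ioo 0 (h (x, t)),
        deriv (fun x' => u (x', y, t)) x
          + deriv (fun y' => v (x, y', t)) y = 0)
    (hstokes : ∀ x ∈ Set.Ioo Λ₁ Λ₂, ∀ t ∈ Set.Ioo 0 T,
      ∀ y ∈ Set.Ioo 0 (h (x, t)),
        deriv (deriv (fun y' => u (x, y', t))) y
          = deriv (fun x' => p (x', y, t)) x)
    (hpy : ∀ x ∈ Set.Ioo Λ₁ Λ₂, ∀ t ∈ Set.Ioo 0 T,
      ∀ y ∈ Set.Ioo 0 (h (x, t)),
        deriv (fun y' => p (x, y', t)) y = 0)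
    -- (ii) at y = h(x,t)
    (hkin : ∀ x ∈ Set.Ioo Λ₁ Λ₂, ∀ t ∈ Set.Ioo 0 T,
      deriv (fun t' => h (x, t')) t
          + u (x, h (x, t), t) * deriv (fun x' => h (x', t)) x
        = v (x, h (x, t), t))
    (hpress : ∀ x ∈ Set.Ioo Λ₁ Λ₂, ∀ t ∈ Set.Ioo 0 T,
      p (x, h (x, t), t) = -(deriv (deriv (fun x' => h (x', t))) x))
    (htang : ∀ x ∈ Set.Ioo Λ₁ Λ₂, ∀ t ∈ Set.Ioo 0 T,
      deriv (fun y' => u (x, y', t)) (h (x, t))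
        = -(deriv (fun x' => ζ₁ (x', t)) x))
    -- (iii) at y = 0
    (hbot : ∀ x ∈ Set.Ioo Λ₁ Λ₂, ∀ t ∈ Set.Ioo 0 T, v (x, 0, t) = 0)
    (hslip : ∀ x ∈ Set.Ioo Λ₁ Λ₂, ∀ t ∈ Set.Ioo 0 T,
      deriv (fun y' => u (x, y', t)) 0
        = (a / 2) * deriv (fun x' => ζ₂ (x', t)) x + β * u (x, 0, t)) :
    ∀ x ∈ Set.Ioo Λ₁ Λ₂, ∀ t ∈ Set.Ioo 0 T,
      deriv (fun t' => h (x, t')) t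
        + deriv (fun x' =>
            (h (x', t) / 3 + 1 / β) * (h (x', t)) ^ 2
                * deriv (deriv (deriv (fun x'' => h (x'', t)))) x'
              - (1 / 2) * (deriv (fun x'' => ζ₁ (x'', t)) x') * (h (x', t)) ^ 2
              - (1 / β) * (deriv (fun x'' => ζ₁ (x'', t)) x'
                  + (a / 2) * deriv (fun x'' => ζ₂ (x'', t)) x') * h (x', t)) x
        = 0 := by
  intro x hx t ht
  have hZ1 : Differentiable ℝ (deriv (fun x' => ζ₁ (x', t))) :=
    (contDiff_deriv_succ (n := 1) (by exact_mod_cast hζ₁x t)).differentiable (by norm_num)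
  have hZ2 : Differentiable ℝ (deriv (fun x' => ζ₂ (x', t))) :=
    (contDiff_deriv_succ (n := 1) (by exact_mod_cast hζ₂x t)).differentiable (by norm_num)
  have hUy : ∀ x', ContDiff ℝ 2 (fun y' => u (x', y', t)) := fun x' =>
    hu.comp (ContDiff.prodMk contDiff_const (ContDiff.prodMk contDiff_id contDiff_const))
  have hVy : ∀ x', Differentiable ℝ (fun y' => v (x', y', t)) := fun x' =>
    (hv.comp (ContDiff.prodMk contDiff_const (ContDiff.prodMk contDiff_id contDiff_const))).differentiable
      (by norm_num)
  have hPy : ∀ x', Differentiable ℝ (fun y' => p (x', y', t)) := fun x' =>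
    (hp.comp (ContDiff.prodMk contDiff_const (ContDiff.prodMk contDiff_id contDiff_const))).differentiable
      (by norm_num)
  have key := thin_film_aux Λ₁ Λ₂ β a hβ
    (fun x' => h (x', t))
    (deriv (fun x' => ζ₁ (x', t)))
    (deriv (fun x' => ζ₂ (x', t)))
    (fun x' => deriv (fun t' => h (x', t')) t)
    (fun x' y' => u (x', y', t))
    (fun x' y' => v (x', y', t))
    (fun x' y' => p (x', y', t))
    (fun x' hx' => hpos x' hx' t ht)
    (hhx t) hZ1 hZ2 hUy hVy hPy
    (fun x' hx' y hy => hincomp x' hx' t ht y hy)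
    (fun x' hx' y hy => hstokes x' hx' t ht y hy)
    (fun x' hx' y hy => hpy x' hx' t ht y hy)
    (fun x' hx' => hkin x' hx' t ht)
    (fun x' hx' => hpress x' hx' t ht)
    (fun x' hx' => htang x' hx' t ht)
    (fun x' hx' => hbot x' hx' t ht)
    (fun x' hx' => hslip x' hx' t ht)
    x hx
  exact key
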